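/- arXiv:2102.06113 — 2 statements merged into one kernel-verified Lean document; each statement's English description precedes it below -/
import Mathlib

section
/- For any pair (g₁,g₂) of 2×2 matrices over a commutative ring with det g₁ = det g₂ = 1, the 4×4 matrix ι₁(g₁,g₂) preserves the quadratic form given by the antidiagonal matrix J₄ with 1's on the antidiagonal, i.e., ᵗι₁(g₁,g₂) · J₄ · ι₁(g₁,g₂) = J₄; equivalently, ι₁(g₁,g₂) ∈ SO₄ with respect to J₄. -/
open Matrix

/-- The map ι₁ of the paper: given a pair of 2×2 matrices, produce the explicit 4×4 matrix. -/
def iota1 {R : Type*} [CommRing R] (g g' : Matrix (Fin 2) (Fin 2) R) :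
    Matrix (Fin 4) (Fin 4) R :=
  !![g 0 0 * g' 0 0, -(g 0 0 * g' 0 1), g 0 1 * g' 0 0, g 0 1 * g' 0 1;
     -(g 0 0 * g' 1 0), g 0 0 * g' 1 1, -(g 0 1 * g' 1 0), -(g 0 1 * g' 1 1);
     g 1 0 * g' 0 0, -(g 1 0 * g' 0 1), g 1 1 * g' 0 0, g 1 1 * g' 0 1;
     g 1 0 * g' 1 0, -(g 1 0 * g' 1 1), g 1 1 * g' 1 0, g 1 1 * g' 1 1]

/-- The 4×4 antidiagonal matrix J₄. -/
def J4 (R : Type*) [CommRing R] : Matrix (Fin 4) (Fin 4) R :=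
  !![0, 0, 0, 1; 0, 0, 1, 0; 0, 1, 0, 0; 1, 0, 0, 0]

set_option maxHeartbeats 1000000 in
/-- For any pair (g₁,g₂) of 2×2 matrices with det g₁ = det g₂ = 1, the matrix
ι₁(g₁,g₂) lies in SO₄ with respect to J₄: ᵗι₁(g₁,g₂) · J₄ · ι₁(g₁,g₂) = J₄ and
det ι₁(g₁,g₂) = 1. -/
theorem iota1_mem_SO4 {R : Type*} [CommRing R] (g₁ g₂ : Matrix (Fin 2) (Fin 2) R)
    (hg₁ : g₁.det = 1) (hg₂ : g₂.det = 1) :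
    (iota1 g₁ g₂)ᵀ * J4 R * iota1 g₁ g₂ = J4 R ∧ (iota1 g₁ g₂).det = 1 := by
  rw [Matrix.det_fin_two] at hg₁ hg₂
  have hT : (iota1 g₁ g₂)ᵀ =
      !![g₁ 0 0 * g₂ 0 0, -(g₁ 0 0 * g₂ 1 0), g₁ 1 0 * g₂ 0 0, g₁ 1 0 * g₂ 1 0;
         -(g₁ 0 0 * g₂ 0 1), g₁ 0 0 * g₂ 1 1, -(g₁ 1 0 * g₂ 0 1), -(g₁ 1 0 * g₂ 1 1);
         g₁ 0 1 * g₂ 0 0, -(g₁ 0 1 * g₂ 1 0), g₁ 1 1 * g₂ 0 0, g₁ 1 1 * g₂ 1 0;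
         g₁ 0 1 * g₂ 0 1, -(g₁ 0 1 * g₂ 1 1), g₁ 1 1 * g₂ 0 1, g₁ 1 1 * g₂ 1 1] := by
    ext i j
    fin_cases i <;> fin_cases j <;> rfl
  constructor
  · rw [hT]
    ext i j
    fin_cases i <;> fin_cases j <;>
      simp [iota1, J4, Matrix.mul_apply, Fin.sum_univ_four, Matrix.vecHead,
        Matrix.vecTail] <;>
      first
        | ring1
        | linear_combination (g₂ 0 0 * g₂ 1 1 - g₂ 0 1 * g₂ 1 0) * hg₁ + hg₂
  · rw [iota1]
    set a := g₁ 0 0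
    set b := g₁ 0 1
    set c := g₁ 1 0
    set d := g₁ 1 1
    set A := g₂ 0 0
    set B := g₂ 0 1
    set C := g₂ 1 0
    set D := g₂ 1 1
    simp [Matrix.det_succ_row_zero, Fin.sum_univ_succ, Fin.succAbove]
    linear_combination (a * d - b * c + 1) * (A * D - B * C) ^ 2 * hg₁ +
      (A * D - B * C + 1) * hg₂
end

section
/- Under the embedding ι : G → SO₅, the image of the unipotent subgroup N₁ = {((1, c/2; 0, 1), (1, -c; 0, 1)) : c ∈ R} is the set of 5×5 matrices of the form with rows (1,0,c,0,-c²/2), (0,1,0,0,0), (0,0,1,0,-c), (0,0,0,1,0), (0,0,0,0,1). -/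
open Matrix
def iota2 {R : Type*} [CommRing R] [Invertible (2 : R)] (A : Matrix (Fin 4) (Fin 4) R) :
    Matrix (Fin 5) (Fin 5) R :=
  let h : R := ⅟(2 : R)
  !![A 0 0, h ^ 2 * A 0 1 - h * A 0 2, h * A 0 1 + A 0 2, -(h * A 0 1) + A 0 2, A 0 3;
     A 1 0 - h * A 2 0,
       h ^ 2 * A 1 1 - h * A 1 2 + h - h ^ 3 * A 2 1 + h ^ 2 * A 2 2,
       h * A 1 1 - A 1 2 - h ^ 2 * A 2 1 - h * A 2 2,
       -(h * A 1 1) - A 1 2 + 1 + h ^ 2 * A 2 1 - h * A 2 2,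
       A 1 3 - h * A 2 3;
     A 1 0 + h * A 2 0,
       h ^ 2 * A 1 1 - h * A 1 2 + h ^ 3 * A 2 1 - h ^ 2 * A 2 2,
       h * A 1 1 + A 1 2 + h ^ 2 * A 2 1 + h * A 2 2,
       -(h * A 1 1) - A 1 2 - h ^ 2 * A 2 1 + h * A 2 2,
       A 1 3 + h * A 2 3;
     -(h * A 1 0) + h ^ 2 * A 2 0,
       -(h ^ 3 * A 1 1) - h ^ 2 * A 1 2 + h ^ 2 + h ^ 4 * A 2 1 - h ^ 3 * A 2 2,
       -(h ^ 2 * A 1 1) - h * A 1 2 + h ^ 3 * A 2 1 + h ^ 2 * A 2 2,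
       h ^ 2 * A 1 1 - h * A 1 2 + h - h ^ 3 * A 2 1 + h ^ 2 * A 2 2,
       -(h * A 1 3) + h ^ 2 * A 2 3;
     A 3 0, h ^ 2 * A 3 1 - h * A 3 2, h * A 3 1 + A 3 2, -(h * A 3 1) + A 3 2, A 3 3]
def iota {R : Type*} [CommRing R] [Invertible (2 : R)]
    (g g' : Matrix (Fin 2) (Fin 2) R) : Matrix (Fin 5) (Fin 5) R :=
  iota2 (iota1 g g')
theorem iota1_N1 {R : Type*} [CommRing R] [Invertible (2 : R)] (c : R) :
    iota1 !![(1 : R), ⅟(2 : R) * c; 0, 1] !![(1 : R), -c; 0, 1]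
      = !![1, c, ⅟(2:R) * c, -(⅟(2:R) * c^2);
           0, 1, 0, -(⅟(2:R) * c);
           0, 0, 1, -c;
           0, 0, 0, 1] := by
  ext i j
  fin_cases i <;> fin_cases j <;> simp [iota1] <;> ring

set_option maxHeartbeats 2000000 in
/-- Lemma 2.8 of the paper: the image under ι of the unipotent element
((1, c/2; 0, 1), (1, -c; 0, 1)) of N₁ is the displayed 5×5 unipotent matrix. -/
theorem iota_N1 {R : Type*} [CommRing R] [Invertible (2 : R)] (c : R) :
    iota !![(1 : R), ⅟(2 : R) * c; 0, 1] !![(1 : R), -c; 0, 1]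
      = !![1, 0, c, 0, -(⅟(2 : R) * c ^ 2);
           0, 1, 0, 0, 0;
           0, 0, 1, 0, -c;
           0, 0, 0, 1, 0;
           0, 0, 0, 0, 1] := by
  have h2 : (⅟(2:R)) * 2 = 1 := invOf_mul_self 2
  rw [iota, iota1_N1]
  ext i j
  fin_cases i <;> fin_cases j <;>
    simp [iota2, Matrix.vecHead, Matrix.vecTail, Function.comp] <;>
    first
      | ring1
      | linear_combination c * h2
      | linear_combination -c * h2
      | linear_combination (⅟(2:R) + 1) * h2
      | linear_combination -h2
      | linear_combination -(⅟(2:R)^2) * h2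
end
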